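/- If p is an odd prime and x, y, z are natural numbers with y ≥ 1 such that z² − 2^(2x) = p^y, then there exists a natural number v with 2v < y, z − 2^x = p^v and z + 2^x = p^(y−v). -/

import Mathlib

theorem stmt14 (p x y z : ℕ) (hp : p.Prime) (hodd : Odd p) (hy : 1 ≤ y)
    (hz : 2 ^ (2 * x) ≤ z ^ 2) (h : z ^ 2 - 2 ^ (2 * x) = p ^ y) :
    ∃ v : ℕ, 2 * v < y ∧ z - 2 ^ x = p ^ v ∧ z + 2 ^ x = p ^ (y - v) := by
  have h2x : 2 ^ (2 * x) = (2 ^ x) ^ 2 := by rw [← pow_mul, mul_comm]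
  have hfac : (z + 2 ^ x) * (z - 2 ^ x) = p ^ y := by
    rw [← Nat.sq_sub_sq, ← h2x, h]
  have hdA : (z - 2 ^ x) ∣ p ^ y := ⟨z + 2 ^ x, by rw [← hfac]; ring⟩
  have hdB : (z + 2 ^ x) ∣ p ^ y := ⟨z - 2 ^ x, hfac.symm⟩
  obtain ⟨a, ha, hA⟩ := (Nat.dvd_prime_pow hp).mp hdA
  obtain ⟨b, hb, hB⟩ := (Nat.dvd_prime_pow hp).mp hdB
  have hablt : a < b := by
    have hAB : z - 2 ^ x < z + 2 ^ x := by
      have hzpos : 0 < z - 2 ^ x := by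
        rcases Nat.eq_zero_or_pos (z - 2 ^ x) with h0 | h0
        · rw [h0, mul_zero] at hfac
          exact absurd hfac.symm (pow_ne_zero y hp.pos.ne')
        · exact h0
      have : 0 < 2 ^ x := Nat.pow_pos (by norm_num)
      omega
    rw [hA, hB] at hAB
    exact (pow_lt_pow_iff_right₀ hp.one_lt).mp hAB
  have hsum : a + b = y := by
    have : p ^ (a + b) = p ^ y := by rw [pow_add, ← hA, ← hB, mul_comm, hfac]
    exact Nat.pow_right_injective hp.two_le this
  exact ⟨a, by omega, hA, by rw [show y - a = b by omega]; exact hB⟩
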